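/- Let M be an F∞-module, and let F∞ denote the three-element F∞-algebra on {-1, 0, 1} with multiplication inherited from the integers, the usual negation, and addition given by a + b = a if a = b and a + b = 0 otherwise. Then the map f ↦ {a ∈ M : f(a) = 1} is a bijection between the set of homomorphisms f : M → F∞ (maps with f(0) = 0, f(-m) = -f(m), and f(m+n) = f(m)+f(n)) and the set of filters on M. -/
import Mathlib


class FinfModule (M : Type*) extends Zero M, Neg M, Add M where
  add_assoc : ∀ a b c : M, a + b + c = a + (b + c)
  add_comm : ∀ a b : M, a + b = b + a
  add_idem : ∀ a : M, a + a = a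
  add_neg : ∀ a : M, a + -a = 0
  neg_add : ∀ a b : M, -(a + b) = -a + -b
  neg_neg : ∀ a : M, - -a = a

inductive Finf : Type
  | zero : Finf
  | one : Finf
  | negOne : Finf
deriving DecidableEq

instance : Zero Finf := ⟨Finf.zero⟩
instance : One Finf := ⟨Finf.one⟩

def Finf.neg : Finf → Finf
  | .zero => .zero
  | .one => .negOne
  | .negOne => .one

instance : Neg Finf := ⟨Finf.neg⟩

def Finf.add (a b : Finf) : Finf := if a = b then a else Finf.zero

instance : Add Finf := ⟨Finf.add⟩

def Finf.mul : Finf → Finf → Finf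
  | .zero, _ => .zero
  | _, .zero => .zero
  | .one, b => b
  | .negOne, b => b.neg

instance : Mul Finf := ⟨Finf.mul⟩

def IsFinfHom {M : Type*} [FinfModule M] (f : M → Finf) : Prop :=
  f 0 = 0 ∧ (∀ m : M, f (-m) = -(f m)) ∧ ∀ m n : M, f (m + n) = f m + f n

def IsFinfFilter {M : Type*} [FinfModule M] (F : Set M) : Prop :=
  (0 : M) ∉ F ∧ (∀ a ∈ F, ∀ b ∈ F, a + b ∈ F) ∧
    ∀ a b : M, a + b ∈ F → a ∈ F ∧ b ∈ F

namespace MyAux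

variable {M : Type*} [FinfModule M]

lemma zero_add' (x : M) : (0 : M) + x = 0 := by
  have h : (0 : M) + x = x + -x + x := by rw [FinfModule.add_neg]
  rw [h, FinfModule.add_assoc, FinfModule.add_comm (-x) x,
    ← FinfModule.add_assoc, FinfModule.add_idem, FinfModule.add_neg]

lemma neg_zero' : -(0 : M) = 0 := by
  have h : -((0 : M) + -0) = -0 := by rw [zero_add']
  rw [FinfModule.neg_add, FinfModule.neg_neg] at h
  rw [← h, FinfModule.add_comm, zero_add']

lemma disj {F : Set M} (hF : IsFinfFilter F) {a : M} (h1 : a ∈ F) (h2 : -a ∈ F) : False := by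
  have := hF.2.1 a h1 (-a) h2
  rw [FinfModule.add_neg] at this
  exact hF.1 this

noncomputable def filtToHom (F : Set M) (a : M) : Finf := by
  classical exact if a ∈ F then .one else if -a ∈ F then .negOne else .zero

lemma filtToHom_of_mem {F : Set M} {a : M} (h : a ∈ F) : filtToHom F a = .one := by
  simp [filtToHom, h]

lemma filtToHom_of_neg_mem {F : Set M} (hF : IsFinfFilter F) {a : M} (h : -a ∈ F) :
    filtToHom F a = .negOne := by
  have : a ∉ F := fun h' => disj hF h' h
  simp [filtToHom, this, h]

lemma filtToHom_of_none {F : Set M} {a : M} (h : a ∉ F) (h' : -a ∉ F) :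
    filtToHom F a = .zero := by
  simp [filtToHom, h, h']

lemma filtToHom_isHom {F : Set M} (hF : IsFinfFilter F) : IsFinfHom (filtToHom F) := by
  refine ⟨?_, ?_, ?_⟩
  · have h0 : (0 : M) ∉ F := hF.1
    have h1 : -(0 : M) ∉ F := by rw [neg_zero']; exact h0
    exact filtToHom_of_none h0 h1
  · intro m
    by_cases hm : m ∈ F
    · rw [filtToHom_of_mem hm, filtToHom_of_neg_mem hF (by rwa [FinfModule.neg_neg])]
      rfl
    · by_cases hn : -m ∈ F
      · rw [filtToHom_of_neg_mem hF hn, filtToHom_of_mem hn]; rfl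
      · rw [filtToHom_of_none hm hn,
          filtToHom_of_none hn (by rwa [FinfModule.neg_neg])]
        rfl
  · intro m n
    by_cases hm : m ∈ F
    · by_cases hn : n ∈ F
      · rw [filtToHom_of_mem hm, filtToHom_of_mem hn,
          filtToHom_of_mem (hF.2.1 m hm n hn)]
        rfl
      · have h1 : m + n ∉ F := fun h => hn (hF.2.2 m n h).2
        by_cases hn' : -n ∈ F
        · have h2 : -(m + n) ∉ F := by
            rw [FinfModule.neg_add]
            exact fun h => disj hF hm (hF.2.2 _ _ h).1
          rw [filtToHom_of_mem hm, filtToHom_of_neg_mem hF hn',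
            filtToHom_of_none h1 h2]
          rfl
        · have h2 : -(m + n) ∉ F := by
            rw [FinfModule.neg_add]
            exact fun h => hn' (hF.2.2 _ _ h).2
          rw [filtToHom_of_mem hm, filtToHom_of_none hn hn',
            filtToHom_of_none h1 h2]
          rfl
    · by_cases hm' : -m ∈ F
      · have h1 : m + n ∉ F := fun h => disj hF (hF.2.2 m n h).1 hm'
        by_cases hn : n ∈ F
        · have h2 : -(m + n) ∉ F := by
            rw [FinfModule.neg_add]
            exact fun h => disj hF hn (hF.2.2 _ _ h).2
          rw [filtToHom_of_neg_mem hF hm', filtToHom_of_mem hn,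
            filtToHom_of_none h1 h2]
          rfl
        · by_cases hn' : -n ∈ F
          · have h2 : -(m + n) ∈ F := by
              rw [FinfModule.neg_add]; exact hF.2.1 _ hm' _ hn'
            rw [filtToHom_of_neg_mem hF hm', filtToHom_of_neg_mem hF hn',
              filtToHom_of_neg_mem hF h2]
            rfl
          · have h2 : -(m + n) ∉ F := by
              rw [FinfModule.neg_add]
              exact fun h => hn' (hF.2.2 _ _ h).2
            rw [filtToHom_of_neg_mem hF hm', filtToHom_of_none hn hn',
              filtToHom_of_none h1 h2]
            rfl
      · have h1 : m + n ∉ F := fun h => hm (hF.2.2 m n h).1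
        have h2 : -(m + n) ∉ F := by
          rw [FinfModule.neg_add]
          exact fun h => hm' (hF.2.2 _ _ h).1
        rw [filtToHom_of_none hm hm', filtToHom_of_none h1 h2]
        cases filtToHom F n <;> rfl

lemma homToFilt_isFilt {f : M → Finf} (hf : IsFinfHom f) :
    IsFinfFilter {a : M | f a = 1} := by
  refine ⟨?_, ?_, ?_⟩
  · simp only [Set.mem_setOf_eq, hf.1]
    exact fun h => Finf.noConfusion h
  · intro a ha b hb
    simp only [Set.mem_setOf_eq] at *
    rw [hf.2.2, ha, hb]; rfl
  · intro a b h
    simp only [Set.mem_setOf_eq] at *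
    rw [hf.2.2] at h
    constructor <;> · cases hfa : f a <;> cases hfb : f b <;>
      rw [hfa, hfb] at h <;> first | rfl | exact Finf.noConfusion h

lemma left_inv' {f : M → Finf} (hf : IsFinfHom f) :
    filtToHom {a : M | f a = 1} = f := by
  funext a
  have hneg : f (-a) = -(f a) := hf.2.1 a
  cases hfa : f a with
  | one => exact filtToHom_of_mem hfa
  | negOne =>
    refine filtToHom_of_neg_mem (homToFilt_isFilt hf) ?_
    simp only [Set.mem_setOf_eq, hneg, hfa]; rfl
  | zero =>
    refine filtToHom_of_none ?_ ?_ <;> simp only [Set.mem_setOf_eq, hneg, hfa]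
    · exact fun h => Finf.noConfusion h
    · exact fun h => Finf.noConfusion h

lemma right_inv' {F : Set M} (hF : IsFinfFilter F) :
    {a : M | filtToHom F a = 1} = F := by
  ext a
  simp only [Set.mem_setOf_eq]
  constructor
  · intro h
    by_contra ha
    by_cases ha' : -a ∈ F
    · rw [filtToHom_of_neg_mem hF ha'] at h; exact Finf.noConfusion h
    · rw [filtToHom_of_none ha ha'] at h; exact Finf.noConfusion h
  · exact filtToHom_of_mem

end MyAux

theorem stmt3 {M : Type*} [FinfModule M] :
    ∃ e : {f : M → Finf // IsFinfHom f} ≃ {F : Set M // IsFinfFilter F},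
      ∀ f : {f : M → Finf // IsFinfHom f}, (e f : Set M) = {a : M | f.1 a = 1} := by
  refine ⟨⟨fun f => ⟨{a : M | f.1 a = 1}, MyAux.homToFilt_isFilt f.2⟩,
    fun F => ⟨MyAux.filtToHom F.1, MyAux.filtToHom_isHom F.2⟩, ?_, ?_⟩, fun f => rfl⟩
  · intro f
    exact Subtype.ext (MyAux.left_inv' f.2)
  · intro F
    exact Subtype.ext (MyAux.right_inv' F.2)
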